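/- Let K ≥ 1 and let a, b : Fin K → ℝ. For w : ℝ define the softmax vector p(w) : Fin K → ℝ by p(w)(k) = exp(a k + w * b k) / ∑_j exp(a j + w * b j). Suppose kmin : Fin K satisfies b kmin ≤ b k for all k, and there exists k with b kmin < b k. Then for every w : ℝ, the derivative of the function w ↦ p(w)(kmin) at w is strictly negative. -/

import Mathlib

open Real Finset

theorem softmax_kmin_deriv_neg
    (K : ℕ) (hK : 1 ≤ K) (a b : Fin K → ℝ)
    (kmin : Fin K) (hmin : ∀ k, b kmin ≤ b k)
    (hne : ∃ k, b kmin < b k) :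
    ∀ w : ℝ, deriv (fun w : ℝ =>
      Real.exp (a kmin + w * b kmin) / ∑ j, Real.exp (a j + w * b j)) w < 0 := by
  intro w
  have hexp : ∀ j : Fin K, HasDerivAt (fun w : ℝ => Real.exp (a j + w * b j))
      (Real.exp (a j + w * b j) * b j) w := by
    intro j
    have h1 : HasDerivAt (fun w : ℝ => a j + w * b j) (b j) w := by
      simpa using (((hasDerivAt_id w).mul_const (b j)).const_add (a j))
    exact h1.exp
  have hN := hexp kmin
  have hD : HasDerivAt (fun w : ℝ => ∑ j, Real.exp (a j + w * b j))
      (∑ j, Real.exp (a j + w * b j) * b j) w := by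
    exact HasDerivAt.fun_sum (fun j _ => hexp j)
  set D := ∑ j, Real.exp (a j + w * b j) with hDdef
  have hDpos : 0 < D :=
    Finset.sum_pos (fun j _ => Real.exp_pos _) ⟨kmin, Finset.mem_univ _⟩
  have hq := hN.fun_div hD hDpos.ne'
  rw [hq.deriv]
  apply div_neg_of_neg_of_pos
  · have key : Real.exp (a kmin + w * b kmin) * b kmin * D -
        Real.exp (a kmin + w * b kmin) * (∑ j, Real.exp (a j + w * b j) * b j)
        = Real.exp (a kmin + w * b kmin) *
          (∑ j, Real.exp (a j + w * b j) * (b kmin - b j)) := by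
      rw [hDdef, Finset.mul_sum, Finset.mul_sum, ← Finset.sum_sub_distrib,
        Finset.mul_sum]
      congr 1; ext j; ring
    rw [key]
    apply mul_neg_of_pos_of_neg (Real.exp_pos _)
    have : (∑ j, Real.exp (a j + w * b j) * (b kmin - b j)) <
        ∑ _j : Fin K, (0 : ℝ) := by
      obtain ⟨k, hk⟩ := hne
      refine Finset.sum_lt_sum (fun j _ => ?_) ⟨k, Finset.mem_univ _, ?_⟩
      · exact mul_nonpos_of_nonneg_of_nonpos (Real.exp_pos _).le
          (sub_nonpos.mpr (hmin j))
      · exact mul_neg_of_pos_of_neg (Real.exp_pos _) (sub_neg.mpr hk)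
    simpa using this
  · positivity
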